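/- Let alpha denote the binary digit sum and define mu(n) = min{ l >= 1 : alpha(n+l) <= l }. For every integer s > 2, mu(2^{s+3} + 2^{s+1} - 5) = 5. -/

import Mathlib

def alpha (n : ℕ) : ℕ := (Nat.digits 2 n).sum

noncomputable def mu (n : ℕ) : ℕ := sInf {l : ℕ | 1 ≤ l ∧ alpha (n + l) ≤ l}

lemma alpha_two_mul (m : ℕ) : alpha (2 * m) = alpha m := by
  rcases Nat.eq_zero_or_pos m with rfl | hm
  · simp
  · unfold alpha
    rw [Nat.digits_def' (by norm_num : 1 < 2) (by omega)]
    simp [Nat.mul_div_cancel_left, Nat.mul_mod_right]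

lemma alpha_two_mul_add_one (m : ℕ) : alpha (2 * m + 1) = alpha m + 1 := by
  unfold alpha
  rw [Nat.digits_def' (by norm_num : 1 < 2) (by omega)]
  have h1 : (2 * m + 1) % 2 = 1 := by omega
  have h2 : (2 * m + 1) / 2 = m := by omega
  rw [h1, h2]
  simp [Nat.add_comm]

lemma alpha_pow_pred (k : ℕ) : alpha (2 ^ k - 1) = k := by
  induction k with
  | zero => simp [alpha]
  | succ k ih =>
    have hp : 1 ≤ 2 ^ k := Nat.one_le_two_pow
    have : 2 ^ (k + 1) - 1 = 2 * (2 ^ k - 1) + 1 := by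
      rw [pow_succ]; omega
    rw [this, alpha_two_mul_add_one, ih]

lemma alpha_pow_add (k m : ℕ) (h : m < 2 ^ k) : alpha (2 ^ k + m) = 1 + alpha m := by
  induction k generalizing m with
  | zero =>
    interval_cases m
    simp [alpha]
  | succ k ih =>
    rcases Nat.even_or_odd m with ⟨q, hq⟩ | ⟨q, hq⟩
    · have hq' : q < 2 ^ k := by rw [pow_succ] at h; omega
      have : 2 ^ (k + 1) + m = 2 * (2 ^ k + q) := by rw [pow_succ]; omega
      rw [this, alpha_two_mul, ih q hq', hq]
      have : q + q = 2 * q := by omega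
      rw [this, alpha_two_mul]
    · have hq' : q < 2 ^ k := by rw [pow_succ] at h; omega
      have : 2 ^ (k + 1) + m = 2 * (2 ^ k + q) + 1 := by rw [pow_succ]; omega
      rw [this, alpha_two_mul_add_one, ih q hq', hq]
      have : 2 * q + 1 = 2 * q + 1 := rfl
      rw [alpha_two_mul_add_one]
      omega

lemma alpha_pow (k : ℕ) : alpha (2 ^ k) = 1 := by
  have := alpha_pow_add k 0 (Nat.pow_pos (by norm_num))
  simpa [alpha] using this

theorem mu_generic_degree (s : ℕ) (hs : 2 < s) :
    mu (2 ^ (s + 3) + 2 ^ (s + 1) - 5) = 5 := by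
  obtain ⟨t, rfl⟩ : ∃ t, s = t + 3 := ⟨s - 3, by omega⟩
  have e1 : t + 3 + 3 = t + 6 := by omega
  have e2 : t + 3 + 1 = t + 4 := by omega
  rw [e1, e2]
  have h16 : (16 : ℕ) ≤ 2 ^ (t + 4) := by
    calc (16 : ℕ) = 2 ^ 4 := by norm_num
    _ ≤ 2 ^ (t + 4) := Nat.pow_le_pow_right (by norm_num) (by omega)
  have hp6 : 2 ^ (t + 6) = 4 * 2 ^ (t + 4) := by ring
  have hp4 : 2 ^ (t + 4) = 4 * 2 ^ (t + 2) := by ring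
  have hp3 : 2 ^ (t + 3) = 2 * 2 ^ (t + 2) := by ring
  -- alpha values
  have key : ∀ m, m < 2 ^ (t + 6) →
      alpha (2 ^ (t + 6) + m) = 1 + alpha m := fun m hm => alpha_pow_add _ m hm
  have hlt : ∀ l, l ≤ 5 → 2 ^ (t + 4) - 5 + l < 2 ^ (t + 6) := by intro l hl; omega
  have hsplit : ∀ l, 2 ^ (t + 6) + 2 ^ (t + 4) - 5 + l
      = 2 ^ (t + 6) + (2 ^ (t + 4) - 5 + l) := by intro l; omega
  have a1 : alpha (2 ^ (t + 4) - 5 + 1) = t + 2 := by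
    have h : 2 ^ (t + 4) - 5 + 1 = 2 * (2 * (2 ^ (t + 2) - 1)) := by omega
    rw [h, alpha_two_mul, alpha_two_mul, alpha_pow_pred]
  have a2 : alpha (2 ^ (t + 4) - 5 + 2) = t + 3 := by
    have h : 2 ^ (t + 4) - 5 + 2 = 2 * (2 * (2 ^ (t + 2) - 1)) + 1 := by omega
    rw [h, alpha_two_mul_add_one, alpha_two_mul, alpha_pow_pred]
  have a3 : alpha (2 ^ (t + 4) - 5 + 3) = t + 3 := by
    have h : 2 ^ (t + 4) - 5 + 3 = 2 * (2 ^ (t + 3) - 1) := by omega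
    rw [h, alpha_two_mul, alpha_pow_pred]
  have a4 : alpha (2 ^ (t + 4) - 5 + 4) = t + 4 := by
    have h : 2 ^ (t + 4) - 5 + 4 = 2 ^ (t + 4) - 1 := by omega
    rw [h, alpha_pow_pred]
  have a5 : alpha (2 ^ (t + 4) - 5 + 5) = 1 := by
    have h : 2 ^ (t + 4) - 5 + 5 = 2 ^ (t + 4) := by omega
    rw [h, alpha_pow]
  have h5mem : 5 ∈ {l : ℕ | 1 ≤ l ∧ alpha (2 ^ (t + 6) + 2 ^ (t + 4) - 5 + l) ≤ l} := by
    refine ⟨by norm_num, ?_⟩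
    rw [hsplit 5, key _ (hlt 5 (by norm_num)), a5]; norm_num
  unfold mu
  refine le_antisymm (Nat.sInf_le h5mem) (le_csInf ⟨5, h5mem⟩ ?_)
  rintro l ⟨hl1, hl2⟩
  by_contra hcon
  push_neg at hcon
  interval_cases l
  · rw [hsplit 1, key _ (hlt 1 (by norm_num)), a1] at hl2; omega
  · rw [hsplit 2, key _ (hlt 2 (by norm_num)), a2] at hl2; omega
  · rw [hsplit 3, key _ (hlt 3 (by norm_num)), a3] at hl2; omega
  · rw [hsplit 4, key _ (hlt 4 (by norm_num)), a4] at hl2; omega
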